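/- Let a : ℝ → (0,1] be continuous, V : ℝ → [0,1] continuous, β > 0, λ ∈ ℝ, G : ℝ → ℝ continuous, and p₁ < p₂ with G(p₁) = λ - β, G(p₂) = λ and λ - β < G(p) < λ on (p₁, p₂). Fix δ ∈ (0, p₂ - p₁) small enough that G(p₁ + δ) = min{G(p) : p₁ + δ ≤ p ≤ p₂} < λ, and fix h ∈ (0,1) with λ - βh - G(p₁+δ) < -β(1-h). Suppose ℓ₁ < ℓ₂ satisfy V(x) ≥ h for all x ∈ [ℓ₁, ℓ₂], and let L₁ ∈ (ℓ₁, ℓ₂) be such that ∫_{ℓ₁}^{L₁} dx/a(x) = ∫_{L₁}^{ℓ₂} dx/a(x) = y₀ where y₀ > (p₂ - p₁)/(β(1-h)). Then every C¹ solution f of a(x)f'(x) + G(f(x)) + βV(x) = λ with p₁ ≤ f ≤ p₂ on ℝ satisfies p₁ ≤ f(x) ≤ p₁ + δ for all x ∈ [L₁, ℓ₂]. -/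
import Mathlib


open Set MeasureTheory intervalIntegral

/-- Deterministic content of Lemma 4.2(a) (hill case): on a hill `V ≥ h` of scaled
length `2y₀`, every solution with values in `[p₁,p₂]` is trapped in `[p₁, p₁+δ]` on the
second half `[L₁, ℓ₂]`. -/
theorem stmt10
    (a V G : ℝ → ℝ) (ha_cont : Continuous a) (ha : ∀ x, 0 < a x ∧ a x ≤ 1)
    (hV_cont : Continuous V) (hV01 : ∀ x, 0 ≤ V x ∧ V x ≤ 1)
    (hGc : Continuous G) (β lam : ℝ) (hβ : 0 < β)
    (p₁ p₂ : ℝ) (hp : p₁ < p₂)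
    (hGp₁ : G p₁ = lam - β) (hGp₂ : G p₂ = lam)
    (hbetw : ∀ q ∈ Ioo p₁ p₂, lam - β < G q ∧ G q < lam)
    (δ : ℝ) (hδ : 0 < δ) (hδ' : δ < p₂ - p₁)
    (hmin : ∀ q ∈ Icc (p₁ + δ) p₂, G (p₁ + δ) ≤ G q) (hminlt : G (p₁ + δ) < lam)
    (h : ℝ) (hh0 : 0 < h) (hh1 : h < 1)
    (hhc : lam - β * h - G (p₁ + δ) < -(β * (1 - h)))
    (ℓ₁ ℓ₂ L₁ : ℝ) (hl₁ : ℓ₁ < L₁) (hl₂ : L₁ < ℓ₂)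
    (hhill : ∀ x ∈ Icc ℓ₁ ℓ₂, h ≤ V x)
    (y₀ : ℝ) (hy₀ : (p₂ - p₁) / (β * (1 - h)) < y₀)
    (hint1 : (∫ x in ℓ₁..L₁, 1 / a x) = y₀)
    (hint2 : (∫ x in L₁..ℓ₂, 1 / a x) = y₀)
    (f f' : ℝ → ℝ) (hf : ∀ x, HasDerivAt f (f' x) x) (hf'c : Continuous f')
    (hbd : ∀ x, p₁ ≤ f x ∧ f x ≤ p₂)
    (hsol : ∀ x, a x * f' x + G (f x) + β * V x = lam) :
    ∀ x ∈ Icc L₁ ℓ₂, p₁ ≤ f x ∧ f x ≤ p₁ + δ := by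
  have hβh : 0 < β * (1 - h) := mul_pos hβ (by linarith)
  -- key differential inequality
  have key : ∀ x ∈ Icc ℓ₁ ℓ₂, p₁ + δ ≤ f x → a x * f' x ≤ -(β * (1 - h)) := by
    intro x hx hfx
    have hG : G (p₁ + δ) ≤ G (f x) := hmin _ ⟨hfx, (hbd x).2⟩
    have hV : h ≤ V x := hhill x hx
    have hβV : β * h ≤ β * V x := mul_le_mul_of_nonneg_left hV hβ.le
    have := hsol x
    linarith
  have key' : ∀ x ∈ Icc ℓ₁ ℓ₂, p₁ + δ ≤ f x →
      f' x ≤ -(β * (1 - h)) * (1 / a x) := by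
    intro x hx hfx
    have hax := (ha x).1
    have h1 := key x hx hfx
    rw [mul_one_div, le_div_iff₀ hax]
    linarith [mul_comm (a x) (f' x)]
  have haI : ∀ s t : ℝ, IntervalIntegrable (fun x => -(β * (1 - h)) * (1 / a x))
      MeasureTheory.volume s t := by
    intro s t
    exact (Continuous.intervalIntegrable
      (continuous_const.mul (continuous_const.div ha_cont fun x => (ha x).1.ne'))) s t
  -- Step 1: f dips below p₁ + δ somewhere in [ℓ₁, L₁]
  have step1 : ∃ x₀ ∈ Icc ℓ₁ L₁, f x₀ ≤ p₁ + δ := by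
    by_contra hc
    push_neg at hc
    have hle : ∀ x ∈ Icc ℓ₁ L₁, f' x ≤ -(β * (1 - h)) * (1 / a x) := by
      intro x hx
      exact key' x ⟨hx.1, hx.2.trans hl₂.le⟩ (hc x hx).le
    have hftc : (∫ x in ℓ₁..L₁, f' x) = f L₁ - f ℓ₁ :=
      intervalIntegral.integral_eq_sub_of_hasDerivAt (fun x _ => hf x)
        (hf'c.intervalIntegrable _ _)
    have hmono : (∫ x in ℓ₁..L₁, f' x) ≤ ∫ x in ℓ₁..L₁, -(β * (1 - h)) * (1 / a x) :=
      intervalIntegral.integral_mono_on hl₁.le (hf'c.intervalIntegrable _ _) (haI _ _) hle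
    have hval : (∫ x in ℓ₁..L₁, -(β * (1 - h)) * (1 / a x)) = -(β * (1 - h)) * y₀ := by
      rw [intervalIntegral.integral_const_mul, hint1]
    have h2 : p₂ - p₁ < β * (1 - h) * y₀ := by
      rw [div_lt_iff₀ hβh] at hy₀
      nlinarith
    have hb1 := (hbd ℓ₁).2
    have hb2 := (hbd L₁).1
    rw [hftc, hval] at hmono
    nlinarith
  obtain ⟨x₀, hx₀, hfx₀⟩ := step1
  -- Step 2: invariance of f ≤ p₁ + δ on [x₀, ℓ₂]
  have step2 : ∀ x₁ ∈ Icc x₀ ℓ₂, f x₁ ≤ p₁ + δ := by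
    intro x₁ hx₁
    by_contra hc
    push_neg at hc
    have hx₀x₁ : x₀ ≤ x₁ := hx₁.1
    have hfc : Continuous f := by
      rw [continuous_iff_continuousAt]; exact fun x => (hf x).continuousAt
    set S : Set ℝ := Icc x₀ x₁ ∩ f ⁻¹' (Iic (p₁ + δ)) with hS
    have hScl : IsClosed S := isClosed_Icc.inter (isClosed_Iic.preimage hfc)
    have hScomp : IsCompact S :=
      isCompact_Icc.of_isClosed_subset hScl inter_subset_left
    have hSne : S.Nonempty := ⟨x₀, ⟨le_refl _, hx₀x₁⟩, hfx₀⟩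
    obtain ⟨hx₂mem, hx₂f⟩ := hScomp.sSup_mem hSne
    set x₂ := sSup S
    have habove : ∀ x ∈ Ioc x₂ x₁, p₁ + δ < f x := by
      intro x hx
      by_contra hfx
      push_neg at hfx
      have : x ∈ S := ⟨⟨le_trans hx₂mem.1 hx.1.le, hx.2⟩, hfx⟩
      exact absurd (le_csSup hScomp.bddAbove this) (not_le.mpr hx.1)
    have hanti : AntitoneOn f (Icc x₂ x₁) := by
      apply antitoneOn_of_deriv_nonpos (convex_Icc x₂ x₁) hfc.continuousOn
      · exact fun x _ => (hf x).differentiableAt.differentiableWithinAt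
      · intro x hx
        rw [interior_Icc] at hx
        rw [(hf x).deriv]
        have hxI : x ∈ Icc ℓ₁ ℓ₂ :=
          ⟨le_trans (le_trans hx₀.1 hx₂mem.1) hx.1.le, le_trans hx.2.le hx₁.2⟩
        have hfx : p₁ + δ ≤ f x := (habove x ⟨hx.1, hx.2.le⟩).le
        have hax := (ha x).1
        have hnp : -(β * (1 - h)) * (1 / a x) ≤ 0 := by
          apply mul_nonpos_of_nonpos_of_nonneg
          · linarith
          · positivity
        linarith [key' x hxI hfx]
    have : f x₁ ≤ f x₂ :=
      hanti ⟨le_refl _, hx₂mem.2⟩ ⟨hx₂mem.2, le_refl _⟩ hx₂mem.2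
    have h3 : f x₂ ≤ p₁ + δ := hx₂f
    linarith
  intro x hx
  exact ⟨(hbd x).1, step2 x ⟨le_trans hx₀.2 hx.1, hx.2⟩⟩
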